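/- There exists a non-decreasing function f : [0,1] → [0,∞] and a point a ∈ [0,∞] such that G_{Ran(f)}(a) ≠ f(f⁻(a)), where f⁻ is the pseudo-inverse of f. Concretely, for f defined by f(x) = 4x on [0,1/4], f(x) = 2 on (1/4,1/2], f(x) = 8x on (1/2,1], one has G_{Ran(f)}(2) = 2 but f(f⁻(2)) = 1. -/
import Mathlib


open Set ENNReal

/-- Pseudo-inverse of `f : [0,1] → [0,∞]`: `f⁻(y) = sup {x ∈ [0,1] | f x < y}` (with `sup ∅ = 0`). -/
noncomputable def pinv (f : unitInterval → ℝ≥0∞) (y : ℝ≥0∞) : unitInterval :=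
  ⟨sSup {x : ℝ | ∃ hx : x ∈ unitInterval, f ⟨x, hx⟩ < y}, by
    set A : Set ℝ := {x : ℝ | ∃ hx : x ∈ unitInterval, f ⟨x, hx⟩ < y} with hA
    have hsub : A ⊆ Set.Icc (0:ℝ) 1 := fun x hx => hx.choose
    rcases A.eq_empty_or_nonempty with h | h
    · rw [h, Real.sSup_empty]; exact ⟨le_refl 0, zero_le_one⟩
    · obtain ⟨a, ha⟩ := h
      exact ⟨le_trans (hsub ha).1 (le_csSup ⟨1, fun z hz => (hsub hz).2⟩ ha),
        csSup_le ⟨a, ha⟩ fun z hz => (hsub hz).2⟩⟩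

/-- `G_M(x) = max (M ∩ {sup([0,x]∩M), inf([x,∞]∩M)})`. -/
noncomputable def GM (M : Set ℝ≥0∞) (x : ℝ≥0∞) : ℝ≥0∞ :=
  sSup (M ∩ {sSup (M ∩ Set.Iic x), sInf (M ∩ Set.Ici x)})

/-- Right limit `f(x⁺)`, with convention `f(1⁺) = ∞`. -/
noncomputable def rlim (f : unitInterval → ℝ≥0∞) (x : unitInterval) : ℝ≥0∞ :=
  if (x : ℝ) = 1 then ⊤ else sInf {z | ∃ t : unitInterval, x < t ∧ f t = z}

/-- The defining condition of the class `𝓕`. -/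
def ClassF (f : unitInterval → ℝ≥0∞) : Prop :=
  ∀ x : unitInterval,
    (rlim f x ∈ Set.range f → f x = rlim f x) ∧
    (rlim f x ∉ Set.range f → ∀ y : unitInterval, y ≠ x → f y ≠ f x)

noncomputable def myf (x : unitInterval) : ℝ≥0∞ :=
  if (x:ℝ) ≤ 1/4 then ENNReal.ofReal (4*x) else
  if (x:ℝ) ≤ 1/2 then 2 else ENNReal.ofReal (8*x)

lemma myf_mono : Monotone myf := by
  intro x y hxy
  have hx0 : (0:ℝ) ≤ x := x.2.1
  have hy0 : (0:ℝ) ≤ y := y.2.1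
  have hxy' : (x:ℝ) ≤ y := hxy
  have two_eq : (2:ℝ≥0∞) = ENNReal.ofReal 2 := by norm_num
  unfold myf
  split_ifs with h1 h2 h3 h4 h5 h6 <;>
    try rw [two_eq]
  all_goals
    first
      | exact le_refl _
      | exact ENNReal.ofReal_le_ofReal (by linarith)

lemma two_mem : (2:ℝ≥0∞) ∈ Set.range myf := by
  refine ⟨⟨1/2, by norm_num, by norm_num⟩, ?_⟩
  norm_num [myf]

lemma GM_eq : GM (Set.range myf) 2 = 2 := by
  set M := Set.range myf
  have h2 : (2:ℝ≥0∞) ∈ M := two_mem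
  have hs : sSup (M ∩ Set.Iic 2) = 2 := by
    apply le_antisymm
    · exact sSup_le fun z hz => hz.2
    · exact le_sSup ⟨h2, Set.mem_Iic.mpr le_rfl⟩
  have hi : sInf (M ∩ Set.Ici 2) = 2 := by
    apply le_antisymm
    · exact sInf_le ⟨h2, Set.mem_Ici.mpr le_rfl⟩
    · exact le_sInf fun z hz => hz.2
  unfold GM
  rw [hs, hi]
  have : M ∩ {(2:ℝ≥0∞), 2} = {2} := by
    ext z
    simp only [Set.mem_inter_iff, Set.mem_insert_iff, Set.mem_singleton_iff, or_self]
    exact ⟨fun h => h.2, fun h => ⟨h ▸ h2, h⟩⟩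
  rw [this, sSup_singleton]

lemma pinv_eq : pinv myf 2 = ⟨1/4, by norm_num, by norm_num⟩ := by
  apply Subtype.ext
  show sSup {x : ℝ | ∃ hx : x ∈ unitInterval, myf ⟨x, hx⟩ < 2} = 1/4
  have hA : {x : ℝ | ∃ hx : x ∈ unitInterval, myf ⟨x, hx⟩ < 2} = Set.Icc 0 (1/4 : ℝ) := by
    ext x
    constructor
    · rintro ⟨hx, hlt⟩
      refine ⟨hx.1, ?_⟩
      by_contra h
      push_neg at h
      unfold myf at hlt
      rw [if_neg (by push_neg; exact h)] at hlt
      split_ifs at hlt with h2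
      · exact lt_irrefl _ hlt
      · push_neg at h2
        have : (2:ℝ≥0∞) ≤ ENNReal.ofReal (8*x) := by
          calc (2:ℝ≥0∞) = ENNReal.ofReal 2 := by norm_num
            _ ≤ ENNReal.ofReal (8*x) := ENNReal.ofReal_le_ofReal (by linarith)
        exact absurd hlt (not_lt.mpr this)
    · rintro ⟨h0, h1⟩
      refine ⟨⟨h0, by linarith⟩, ?_⟩
      unfold myf
      rw [if_pos (by exact h1)]
      calc ENNReal.ofReal (4*x) ≤ ENNReal.ofReal 1 := ENNReal.ofReal_le_ofReal (by linarith)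
        _ = 1 := by norm_num
        _ < 2 := by norm_num
  rw [hA, csSup_Icc (by norm_num)]

theorem stmt5 :
    ∃ f : unitInterval → ℝ≥0∞, Monotone f ∧
      GM (Set.range f) 2 = 2 ∧ f (pinv f 2) = 1 ∧
      GM (Set.range f) 2 ≠ f (pinv f 2) := by
  refine ⟨myf, myf_mono, GM_eq, ?_, ?_⟩
  · rw [pinv_eq]
    unfold myf
    norm_num
  · rw [GM_eq, pinv_eq]
    unfold myf
    norm_num
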